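/- Let p ≥ 1 be real, x, y reals, i an integer. Define t^(i) = ⌊t/2^i⌋·2^i, G_i(x,y) = (max(0, |x^(i) - y^(i)| - 2^i))^p and g_i = G_i - G_{i+1}. Then |g_i(x,y)| ≤ 2·p·2^i·|x - y|^(p-1) whenever x ≠ y. -/

import Mathlib

private lemma stmt12_round_le (t : ℝ) (k : ℤ) : (⌊t / 2 ^ k⌋ : ℝ) * 2 ^ k ≤ t := by
  have hk : (0:ℝ) < 2 ^ k := zpow_pos (by norm_num) k
  have := Int.floor_le (t / 2 ^ k)
  calc (⌊t / 2 ^ k⌋ : ℝ) * 2 ^ k ≤ (t / 2 ^ k) * 2 ^ k :=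
        mul_le_mul_of_nonneg_right this hk.le
    _ = t := by field_simp

private lemma stmt12_lt_round_add (t : ℝ) (k : ℤ) :
    t < (⌊t / 2 ^ k⌋ : ℝ) * 2 ^ k + 2 ^ k := by
  have hk : (0:ℝ) < 2 ^ k := zpow_pos (by norm_num) k
  have h := Int.lt_floor_add_one (t / 2 ^ k)
  have h' := mul_lt_mul_of_pos_right h hk
  calc t = (t / 2 ^ k) * 2 ^ k := by field_simp
    _ < ((⌊t / 2 ^ k⌋ : ℝ) + 1) * 2 ^ k := h'
    _ = (⌊t / 2 ^ k⌋ : ℝ) * 2 ^ k + 2 ^ k := by ring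

private lemma stmt12_round_nest (t : ℝ) (i : ℤ) :
    (⌊t / 2 ^ (i+1)⌋ : ℝ) * 2 ^ (i+1) ≤ (⌊t / 2 ^ i⌋ : ℝ) * 2 ^ i ∧
    (⌊t / 2 ^ i⌋ : ℝ) * 2 ^ i ≤ (⌊t / 2 ^ (i+1)⌋ : ℝ) * 2 ^ (i+1) + 2 ^ i := by
  have hk : (0:ℝ) < 2 ^ i := zpow_pos (by norm_num) i
  have h2 : (2:ℝ) ^ (i+1) = 2 ^ i * 2 := by
    rw [zpow_add_one₀ (by norm_num : (2:ℝ) ≠ 0)]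
  set F : ℝ := (⌊t / 2 ^ (i+1)⌋ : ℝ) with hF
  have hid : F * 2 ^ (i+1) = 2 * F * 2 ^ i := by rw [h2]; ring
  have hle := stmt12_round_le t (i+1)
  have hlt := stmt12_lt_round_add t (i+1)
  have key1 : (2 * ⌊t / 2 ^ (i+1)⌋ : ℤ) ≤ ⌊t / 2 ^ i⌋ := by
    rw [Int.le_floor]
    push_cast
    rw [le_div_iff₀ hk]
    linarith
  have key2 : ⌊t / 2 ^ i⌋ ≤ 2 * ⌊t / 2 ^ (i+1)⌋ + 1 := by
    have : ⌊t / 2 ^ i⌋ < 2 * ⌊t / 2 ^ (i+1)⌋ + 2 := by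
      rw [Int.floor_lt]
      push_cast
      rw [div_lt_iff₀ hk]
      have : (2 * F + 2) * 2 ^ i = F * 2 ^ (i+1) + 2 ^ (i+1) := by rw [h2]; ring
      linarith
    omega
  have key1' : 2 * F ≤ (⌊t / 2 ^ i⌋ : ℝ) := by rw [hF]; exact_mod_cast key1
  have key2' : (⌊t / 2 ^ i⌋ : ℝ) ≤ 2 * F + 1 := by rw [hF]; exact_mod_cast key2
  constructor
  · have := mul_le_mul_of_nonneg_right key1' hk.le
    linarith
  · have := mul_le_mul_of_nonneg_right key2' hk.le
    have hexp : (2 * F + 1) * 2 ^ i = F * 2 ^ (i+1) + 2 ^ i := by rw [h2]; ring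
    linarith

private lemma stmt12_max_lip (a b : ℝ) : |max 0 a - max 0 b| ≤ |a - b| := by
  rw [max_comm 0 a, max_comm 0 b]
  exact abs_max_sub_max_le_abs a b 0

private lemma stmt12_rpow_mvt {u v p : ℝ} (hv : 0 ≤ v) (huv : v ≤ u) (hp : 1 ≤ p) :
    u ^ p - v ^ p ≤ p * u ^ (p - 1) * (u - v) := by
  have hu : 0 ≤ u := hv.trans huv
  rcases eq_or_lt_of_le hu with h0 | h0
  · have hu0 : u = 0 := h0.symm
    have hv0 : v = 0 := le_antisymm (huv.trans_eq hu0) hv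
    subst hu0 hv0
    simp [Real.zero_rpow (by positivity : p ≠ 0)]
  · set t : ℝ := v / u with ht
    have ht0 : 0 ≤ t := div_nonneg hv h0.le
    have hbern : 1 + p * (t - 1) ≤ t ^ p := by
      have := one_add_mul_self_le_rpow_one_add (by linarith : (-1:ℝ) ≤ t - 1) hp
      simpa using this
    have hvut : v = u * t := by rw [ht, mul_div_assoc', mul_div_cancel_left₀ v h0.ne']
    have hmul : v ^ p = u ^ p * t ^ p := by
      rw [hvut, Real.mul_rpow h0.le ht0]
    have hup : 0 ≤ u ^ p := Real.rpow_nonneg h0.le p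
    have h1 : u ^ p * (1 + p * (t - 1)) ≤ v ^ p := by
      rw [hmul]
      exact mul_le_mul_of_nonneg_left hbern hup
    have hupow : u ^ (p - 1) * u = u ^ p := by
      rw [← Real.rpow_add_one (ne_of_gt h0)]
      ring_nf
    have huv' : u - v = u * (1 - t) := by rw [hvut]; ring
    calc u ^ p - v ^ p ≤ u ^ p - u ^ p * (1 + p * (t - 1)) := by linarith
      _ = p * u ^ p * (1 - t) := by ring
      _ = p * u ^ (p - 1) * (u * (1 - t)) := by rw [← hupow]; ring
      _ = p * u ^ (p - 1) * (u - v) := by rw [← huv']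

theorem stmt_12 (p : ℝ) (hp : 1 ≤ p) (x y : ℝ) (i : ℤ)
    (G : ℤ → ℝ → ℝ → ℝ)
    (hG : ∀ k : ℤ, ∀ a b : ℝ,
      G k a b =
        (max 0 (|(⌊a / 2 ^ k⌋ : ℝ) * 2 ^ k - (⌊b / 2 ^ k⌋ : ℝ) * 2 ^ k| - 2 ^ k)) ^ p)
    (hxy : x ≠ y) :
    |G i x y - G (i + 1) x y| ≤ 2 * p * 2 ^ i * |x - y| ^ (p - 1) := by
  have hk : (0:ℝ) < 2 ^ i := zpow_pos (by norm_num) i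
  have h2 : (2:ℝ) ^ (i+1) = 2 ^ i * 2 := by
    rw [zpow_add_one₀ (by norm_num : (2:ℝ) ≠ 0)]
  set a1 : ℝ := (⌊x / 2 ^ i⌋ : ℝ) * 2 ^ i with ha1
  set b1 : ℝ := (⌊y / 2 ^ i⌋ : ℝ) * 2 ^ i with hb1
  set a2 : ℝ := (⌊x / 2 ^ (i+1)⌋ : ℝ) * 2 ^ (i+1) with ha2
  set b2 : ℝ := (⌊y / 2 ^ (i+1)⌋ : ℝ) * 2 ^ (i+1) with hb2
  set u : ℝ := max 0 (|a1 - b1| - 2 ^ i) with hu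
  set v : ℝ := max 0 (|a2 - b2| - 2 ^ (i+1)) with hv
  have hGu : G i x y = u ^ p := hG i x y
  have hGv : G (i+1) x y = v ^ p := hG (i+1) x y
  have hM : (0:ℝ) < |x - y| := abs_pos.mpr (sub_ne_zero.mpr hxy)
  have hu_le : u ≤ |x - y| := by
    apply max_le hM.le
    have h1 := stmt12_round_le x i
    have h2' := stmt12_lt_round_add x i
    have h3 := stmt12_round_le y i
    have h4 := stmt12_lt_round_add y i
    have hb : |a1 - b1| ≤ |x - y| + 2 ^ i := by
      rcases abs_cases (a1 - b1) with ⟨e1, _⟩ | ⟨e1, _⟩ <;>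
        rcases abs_cases (x - y) with ⟨e2, _⟩ | ⟨e2, _⟩ <;>
        rw [e1, e2] <;> linarith
    linarith
  have hv_le : v ≤ |x - y| := by
    apply max_le hM.le
    have hk2 : (0:ℝ) < 2 ^ (i+1) := zpow_pos (by norm_num) (i+1)
    have h1 := stmt12_round_le x (i+1)
    have h2' := stmt12_lt_round_add x (i+1)
    have h3 := stmt12_round_le y (i+1)
    have h4 := stmt12_lt_round_add y (i+1)
    have hb : |a2 - b2| ≤ |x - y| + 2 ^ (i+1) := by
      rcases abs_cases (a2 - b2) with ⟨e1, _⟩ | ⟨e1, _⟩ <;>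
        rcases abs_cases (x - y) with ⟨e2, _⟩ | ⟨e2, _⟩ <;>
        rw [e1, e2] <;> linarith
    linarith
  have hu0 : 0 ≤ u := le_max_left _ _
  have hv0 : 0 ≤ v := le_max_left _ _
  have hnx := stmt12_round_nest x i
  have hny := stmt12_round_nest y i
  have hd : |(a1 - b1) - (a2 - b2)| ≤ 2 ^ i := by
    rcases abs_cases ((a1 - b1) - (a2 - b2)) with ⟨e1, _⟩ | ⟨e1, _⟩ <;> rw [e1] <;>
      [linarith [hnx.1, hnx.2, hny.1, hny.2]; linarith [hnx.1, hnx.2, hny.1, hny.2]]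
  have habs : |(|a1 - b1| - |a2 - b2|)| ≤ 2 ^ i :=
    (abs_abs_sub_abs_le_abs_sub _ _).trans hd
  have huv : |u - v| ≤ 2 * 2 ^ i := by
    have hlip : |u - v| ≤ |(|a1 - b1| - 2 ^ i) - (|a2 - b2| - 2 ^ (i+1))| :=
      stmt12_max_lip _ _
    have hbd : |(|a1 - b1| - 2 ^ i) - (|a2 - b2| - 2 ^ (i+1))| ≤ 2 * 2 ^ i := by
      rw [abs_le] at habs ⊢
      constructor <;> [linarith [habs.1, habs.2, h2]; linarith [habs.1, habs.2, h2]]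
    linarith
  have hfin : ∀ s t : ℝ, 0 ≤ t → t ≤ s → s ≤ |x - y| → s - t ≤ 2 * 2 ^ i →
      s ^ p - t ^ p ≤ 2 * p * 2 ^ i * |x - y| ^ (p - 1) := by
    intro s t ht hts hs h3
    have hs0 : 0 ≤ s := ht.trans hts
    have h1 : s ^ p - t ^ p ≤ p * s ^ (p - 1) * (s - t) := stmt12_rpow_mvt ht hts hp
    have h2' : s ^ (p - 1) ≤ |x - y| ^ (p - 1) :=
      Real.rpow_le_rpow hs0 hs (by linarith)
    have hp0 : (0:ℝ) < p := by linarith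
    have hr0 : 0 ≤ s ^ (p - 1) := Real.rpow_nonneg hs0 _
    calc s ^ p - t ^ p ≤ p * s ^ (p - 1) * (2 * 2 ^ i) := by
          apply h1.trans
          exact mul_le_mul_of_nonneg_left h3 (mul_nonneg hp0.le hr0)
      _ ≤ p * |x - y| ^ (p - 1) * (2 * 2 ^ i) := by
          apply mul_le_mul_of_nonneg_right _ (by positivity)
          exact mul_le_mul_of_nonneg_left h2' hp0.le
      _ = 2 * p * 2 ^ i * |x - y| ^ (p - 1) := by ring
  rw [hGu, hGv, abs_le]
  rcases le_total u v with h | h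
  · constructor
    · have := hfin v u hu0 h hv_le (by rcases abs_le.mp huv with ⟨h1, _⟩; linarith)
      linarith
    · have hle : u ^ p ≤ v ^ p := Real.rpow_le_rpow hu0 h (by linarith)
      have hpos : (0:ℝ) ≤ 2 * p * 2 ^ i * |x - y| ^ (p - 1) := by positivity
      linarith
  · constructor
    · have hle : v ^ p ≤ u ^ p := Real.rpow_le_rpow hv0 h (by linarith)
      have hpos : (0:ℝ) ≤ 2 * p * 2 ^ i * |x - y| ^ (p - 1) := by positivity
      linarith
    · exact hfin u v hv0 h hu_le (by rcases abs_le.mp huv with ⟨_, h1⟩; linarith)
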